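/- Let C be an arrovian voting system on at least three alternatives and K ⊆ I a decisive set. Then the following are equivalent: (1) K is minimal among decisive sets; (2) K is contained in every decisive set; (3) every member k of K has veto power, i.e., for every profile, a ⋡_k b implies a ⋡ b in the aggregate. -/
import Mathlib


variable {A I : Type*}

/-- A partial preorder: a reflexive and transitive binary relation. -/
def IsPPO (P : A → A → Prop) : Prop := Reflexive P ∧ Transitive P

/-- A linear (total) preorder: reflexive, transitive and complete. -/
def IsLPO (P : A → A → Prop) : Prop := Reflexive P ∧ Transitive P ∧ ∀ a b, P a b ∨ P b a

/-- A profile of partial preorders. -/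
def IsPPOProfile (P : I → A → A → Prop) : Prop := ∀ i, IsPPO (P i)

/-- A profile of linear (total) preorders. -/
def IsLPOProfile (P : I → A → A → Prop) : Prop := ∀ i, IsLPO (P i)

/-- Strict preference. -/
def StrictPref (P : A → A → Prop) (a b : A) : Prop := P a b ∧ ¬ P b a

/-- Indifference. -/
def Indiff (P : A → A → Prop) (a b : A) : Prop := P a b ∧ P b a

/-- The set `A` contains at least three distinct alternatives. -/
def ThreeAlts (A : Type*) : Prop := ∃ a b c : A, a ≠ b ∧ b ≠ c ∧ a ≠ c

/-- Unanimity. -/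
def Unanimity (C : (I → A → A → Prop) → A → A → Prop) : Prop :=
  ∀ P, IsPPOProfile P → ∀ a b : A, (∀ i, P i a b) → C P a b

/-- Independence of irrelevant alternatives. -/
def IIA (C : (I → A → A → Prop) → A → A → Prop) : Prop :=
  ∀ P P' : I → A → A → Prop, IsPPOProfile P → IsPPOProfile P' → ∀ a b : A,
    {i | P i a b} = {i | P' i a b} → {i | P i b a} = {i | P' i b a} →
    (C P a b ↔ C P' a b)

/-- Neutrality: `C (ρ*P) = ρ*(C P)` for every permutation `ρ` of the alternatives. -/
def Neutrality (C : (I → A → A → Prop) → A → A → Prop) : Prop :=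
  ∀ (ρ : Equiv.Perm A) (P : I → A → A → Prop), IsPPOProfile P →
    ∀ x y : A, C (fun i a b => P i (ρ.symm a) (ρ.symm b)) x y ↔ C P (ρ.symm x) (ρ.symm y)

/-- Monotonicity. -/
def Monotonicity (C : (I → A → A → Prop) → A → A → Prop) : Prop :=
  ∀ P P' : I → A → A → Prop, IsPPOProfile P → IsPPOProfile P' → ∀ a b : A,
    {i | P i a b} ⊆ {i | P' i a b} → {i | P' i b a} ⊆ {i | P i b a} →
    C P a b → C P' a b

/-- `J` is a decisive set: unanimous strict preference on `J` forces weak aggregate preference. -/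
def Decisive (C : (I → A → A → Prop) → A → A → Prop) (J : Set I) : Prop :=
  ∀ P, IsPPOProfile P → ∀ a b : A, (∀ j ∈ J, StrictPref (P j) a b) → C P a b

/-- `J` is a strongly decisive set: unanimous weak preference on `J` forces weak aggregate preference. -/
def SDecisive (C : (I → A → A → Prop) → A → A → Prop) (J : Set I) : Prop :=
  ∀ P, IsPPOProfile P → ∀ a b : A, (∀ j ∈ J, P j a b) → C P a b

lemma exists_third (hA : ThreeAlts A) (x y : A) : ∃ z : A, z ≠ x ∧ z ≠ y := by
  obtain ⟨a, b, c, hab, hbc, hac⟩ := hA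
  by_cases h1 : a ≠ x ∧ a ≠ y
  · exact ⟨a, h1⟩
  · by_cases h2 : b ≠ x ∧ b ≠ y
    · exact ⟨b, h2⟩
    · have h1' : a = x ∨ a = y := by tauto
      have h2' : b = x ∨ b = y := by tauto
      refine ⟨c, fun hcx => ?_, fun hcy => ?_⟩
      · rcases h1' with h | h <;> rcases h2' with h' | h'
        · exact hab (h.trans h'.symm)
        · exact hac (h.trans hcx.symm)
        · exact hbc (h'.trans hcx.symm)
        · exact hab (h.trans h'.symm)
      · rcases h1' with h | h <;> rcases h2' with h' | h'
        · exact hab (h.trans h'.symm)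
        · exact hbc (h'.trans hcy.symm)
        · exact hac (h.trans hcy.symm)
        · exact hab (h.trans h'.symm)

def Forcing (C : (I → A → A → Prop) → A → A → Prop) (J : Set I) (a b : A) : Prop :=
  ∀ P : I → A → A → Prop, IsPPOProfile P →
    {i | P i a b} = J → {i | P i b a} = (∅ : Set I) → C P a b

section Steps
variable {C : (I → A → A → Prop) → A → A → Prop}

lemma forcing_step1 (hC : ∀ P, IsPPOProfile P → IsPPO (C P))
    (hU : Unanimity C) (hIIA : IIA C) {J : Set I} {a b c : A}
    (hab : a ≠ b) (hca : c ≠ a) (hcb : c ≠ b) (hF : Forcing C J a b) :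
    Forcing C J a c := by
  intro P hP h1 h2
  set R : I → A → A → Prop :=
    fun i x y => x = y ∨ (x = b ∧ y = c) ∨ (i ∈ J ∧ x = a ∧ (y = b ∨ y = c)) with hRdef
  have hR : IsPPOProfile R := by
    intro i
    refine ⟨fun x => Or.inl rfl, ?_⟩
    intro x y z hxy hyz
    simp only [hRdef] at hxy hyz ⊢
    aesop
  have sab : {i | R i a b} = J := by
    ext i; simp [hRdef, hab, Ne.symm hab, hca, Ne.symm hca, hcb, Ne.symm hcb]
  have sba : {i | R i b a} = (∅ : Set I) := by
    ext i; simp [hRdef, hab, Ne.symm hab, hca, Ne.symm hca, hcb, Ne.symm hcb]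
  have hRab : C R a b := hF R hR sab sba
  have hRbc : C R b c := hU R hR b c (fun i => Or.inr (Or.inl ⟨rfl, rfl⟩))
  have hRac : C R a c := (hC R hR).2 hRab hRbc
  have sac : {i | R i a c} = J := by
    ext i; simp [hRdef, hab, Ne.symm hab, hca, Ne.symm hca, hcb, Ne.symm hcb]
  have sca : {i | R i c a} = (∅ : Set I) := by
    ext i; simp [hRdef, hab, Ne.symm hab, hca, Ne.symm hca, hcb, Ne.symm hcb]
  exact (hIIA R P hR hP a c (sac.trans h1.symm) (sca.trans h2.symm)).mp hRac

lemma forcing_step2 (hC : ∀ P, IsPPOProfile P → IsPPO (C P))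
    (hU : Unanimity C) (hIIA : IIA C) {J : Set I} {a b c : A}
    (hab : a ≠ b) (hca : c ≠ a) (hcb : c ≠ b) (hF : Forcing C J a b) :
    Forcing C J c b := by
  intro P hP h1 h2
  set R : I → A → A → Prop :=
    fun i x y => x = y ∨ (x = c ∧ y = a) ∨ (i ∈ J ∧ (x = a ∨ x = c) ∧ y = b) with hRdef
  have hR : IsPPOProfile R := by
    intro i
    refine ⟨fun x => Or.inl rfl, ?_⟩
    intro x y z hxy hyz
    simp only [hRdef] at hxy hyz ⊢
    aesop
  have sab : {i | R i a b} = J := by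
    ext i; simp [hRdef, hab, Ne.symm hab, hca, Ne.symm hca, hcb, Ne.symm hcb]
  have sba : {i | R i b a} = (∅ : Set I) := by
    ext i; simp [hRdef, hab, Ne.symm hab, hca, Ne.symm hca, hcb, Ne.symm hcb]
  have hRca : C R c a := hU R hR c a (fun i => Or.inr (Or.inl ⟨rfl, rfl⟩))
  have hRab : C R a b := hF R hR sab sba
  have hRcb : C R c b := (hC R hR).2 hRca hRab
  have scb : {i | R i c b} = J := by
    ext i; simp [hRdef, hab, Ne.symm hab, hca, Ne.symm hca, hcb, Ne.symm hcb]
  have sbc : {i | R i b c} = (∅ : Set I) := by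
    ext i; simp [hRdef, hab, Ne.symm hab, hca, Ne.symm hca, hcb, Ne.symm hcb]
  exact (hIIA R P hR hP c b (scb.trans h1.symm) (sbc.trans h2.symm)).mp hRcb

end Steps

section Main
variable {C : (I → A → A → Prop) → A → A → Prop}

lemma forcing_all (hA : ThreeAlts A) (hC : ∀ P, IsPPOProfile P → IsPPO (C P))
    (hU : Unanimity C) (hIIA : IIA C) {J : Set I} {a b : A}
    (hab : a ≠ b) (hF : Forcing C J a b) :
    ∀ x y : A, x ≠ y → Forcing C J x y := by
  have hba : Forcing C J b a := by
    obtain ⟨c, hca, hcb⟩ := exists_third hA a b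
    have f1 : Forcing C J a c := forcing_step1 hC hU hIIA hab hca hcb hF
    have f2 : Forcing C J b c :=
      forcing_step2 hC hU hIIA (fun h => hca h.symm) (Ne.symm hab) hcb.symm f1
    exact forcing_step1 hC hU hIIA (Ne.symm hcb) hab (Ne.symm hca) f2
  intro x y hxy
  by_cases hxa : x = a
  · subst hxa
    by_cases hyb : y = b
    · subst hyb; exact hF
    · exact forcing_step1 hC hU hIIA hab (Ne.symm hxy) hyb hF
  · by_cases hxb : x = b
    · subst hxb
      by_cases hya : y = a
      · subst hya; exact hba
      · exact forcing_step1 hC hU hIIA (Ne.symm hab) (Ne.symm hxy) hya hba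
    · by_cases hyb : y = b
      · subst hyb; exact forcing_step2 hC hU hIIA hab hxa hxy hF
      · by_cases hya : y = a
        · subst hya; exact forcing_step2 hC hU hIIA (Ne.symm hab) hxb hxy hba
        · have f1 : Forcing C J a y := forcing_step1 hC hU hIIA hab hya hyb hF
          exact forcing_step2 hC hU hIIA (fun h => hya h.symm) hxa hxy f1

lemma decisive_of_forcing (hA : ThreeAlts A) (hC : ∀ P, IsPPOProfile P → IsPPO (C P))
    (hIIA : IIA C) {J : Set I}
    (hF : ∀ x y : A, x ≠ y → Forcing C J x y) : Decisive C J := by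
  intro Q hQ x y hstrict
  by_cases hxy : x = y
  · subst hxy; exact (hC Q hQ).1 x
  · obtain ⟨z, hzx, hzy⟩ := exists_third hA x y
    have hJxy : ∀ i ∈ J, Q i x y := fun i hi => (hstrict i hi).1
    have hJyx : ∀ i ∈ J, ¬ Q i y x := fun i hi => (hstrict i hi).2
    set R : I → A → A → Prop := fun i u v => u = v ∨
      (i ∈ J ∧ ((u = x ∧ v = z) ∨ (u = z ∧ v = y) ∨ (u = x ∧ v = y))) ∨
      (Q i x y ∧ u = x ∧ v = y) ∨ (Q i y x ∧ u = y ∧ v = x) with hRdef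
    have hR : IsPPOProfile R := by
      intro i
      refine ⟨fun u => Or.inl rfl, ?_⟩
      intro u v w huv hvw
      simp only [hRdef] at huv hvw ⊢
      by_cases hiJ : i ∈ J
      · have := hJyx i hiJ; aesop
      · aesop
    have sxz : {i | R i x z} = J := by
      ext i; simp [hRdef, hxy, Ne.symm hxy, hzx, Ne.symm hzx, hzy, Ne.symm hzy]
    have szx : {i | R i z x} = (∅ : Set I) := by
      ext i; simp [hRdef, hxy, Ne.symm hxy, hzx, Ne.symm hzx, hzy, Ne.symm hzy]
    have szy : {i | R i z y} = J := by
      ext i; simp [hRdef, hxy, Ne.symm hxy, hzx, Ne.symm hzx, hzy, Ne.symm hzy]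
    have syz : {i | R i y z} = (∅ : Set I) := by
      ext i; simp [hRdef, hxy, Ne.symm hxy, hzx, Ne.symm hzx, hzy, Ne.symm hzy]
    have hRxz : C R x z := hF x z (Ne.symm hzx) R hR sxz szx
    have hRzy : C R z y := hF z y hzy R hR szy syz
    have hRxy : C R x y := (hC R hR).2 hRxz hRzy
    have sxy : {i | R i x y} = {i | Q i x y} := by
      ext i
      constructor
      · rintro (h | ⟨hi, h⟩ | ⟨h, -⟩ | ⟨h, h', -⟩)
        · exact absurd h hxy
        · exact hJxy i hi
        · exact h
        · exact absurd h' hxy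
      · intro h; exact Or.inr (Or.inr (Or.inl ⟨h, rfl, rfl⟩))
    have syx : {i | R i y x} = {i | Q i y x} := by
      ext i
      constructor
      · rintro (h | ⟨hi, (⟨h, h'⟩ | ⟨h, h'⟩ | ⟨h, h'⟩)⟩ | ⟨h, h', -⟩ | ⟨h, -⟩)
        · exact absurd h (fun hh => hxy hh.symm)
        · exact absurd h (fun hh => hxy hh.symm)
        · exact absurd h (Ne.symm hzy)
        · exact absurd h (fun hh => hxy hh.symm)
        · exact absurd h' (fun hh => hxy hh.symm)
        · exact h
      · intro h; exact Or.inr (Or.inr (Or.inr ⟨h, rfl, rfl⟩))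
    exact (hIIA R Q hR hQ x y sxy syx).mp hRxy

end Main

section Main2
variable {C : (I → A → A → Prop) → A → A → Prop}

lemma decisive_of_C (hA : ThreeAlts A) (hC : ∀ P, IsPPOProfile P → IsPPO (C P))
    (hU : Unanimity C) (hIIA : IIA C) {P : I → A → A → Prop} {a b : A}
    (hP : IsPPOProfile P) (hab : a ≠ b) (hCab : C P a b) :
    Decisive C {i | P i a b} := by
  obtain ⟨c, hca, hcb⟩ := exists_third hA a b
  set R : I → A → A → Prop := fun i x y => x = y ∨ (x = b ∧ y = c) ∨
      (P i a b ∧ ((x = a ∧ y = b) ∨ (x = a ∧ y = c))) ∨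
      (P i b a ∧ x = b ∧ y = a) with hRdef
  have hR : IsPPOProfile R := by
    intro i
    refine ⟨fun x => Or.inl rfl, ?_⟩
    intro x y z hxy hyz
    simp only [hRdef] at hxy hyz ⊢
    aesop
  have sab : {i | R i a b} = {i | P i a b} := by
    ext i; simp [hRdef, hab, Ne.symm hab, hca, Ne.symm hca, hcb, Ne.symm hcb]
  have sba : {i | R i b a} = {i | P i b a} := by
    ext i; simp [hRdef, hab, Ne.symm hab, hca, Ne.symm hca, hcb, Ne.symm hcb]
  have hRab : C R a b := (hIIA P R hP hR a b sab.symm sba.symm).mp hCab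
  have hRbc : C R b c := hU R hR b c (fun i => Or.inr (Or.inl ⟨rfl, rfl⟩))
  have hRac : C R a c := (hC R hR).2 hRab hRbc
  have sac : {i | R i a c} = {i | P i a b} := by
    ext i; simp [hRdef, hab, Ne.symm hab, hca, Ne.symm hca, hcb, Ne.symm hcb]
  have sca : {i | R i c a} = (∅ : Set I) := by
    ext i; simp [hRdef, hab, Ne.symm hab, hca, Ne.symm hca, hcb, Ne.symm hcb]
  have hFac : Forcing C {i | P i a b} a c := by
    intro P' hP' e1 e2
    exact (hIIA R P' hR hP' a c (sac.trans e1.symm) (sca.trans e2.symm)).mp hRac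
  exact decisive_of_forcing hA hC hIIA
    (forcing_all hA hC hU hIIA (Ne.symm hca) hFac)

lemma decisive_inter (hA : ThreeAlts A) (hC : ∀ P, IsPPOProfile P → IsPPO (C P))
    (hU : Unanimity C) (hIIA : IIA C) {K K' : Set I}
    (h1 : Decisive C K) (h2 : Decisive C K') : Decisive C (K ∩ K') := by
  obtain ⟨a, b, c, hab, hbc, hac⟩ := id hA
  set R : I → A → A → Prop := fun i x y => x = y ∨ (i ∈ K ∧ x = a ∧ y = b) ∨
      (i ∈ K' ∧ x = b ∧ y = c) ∨ (i ∈ K ∧ i ∈ K' ∧ x = a ∧ y = c) with hRdef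
  have hR : IsPPOProfile R := by
    intro i
    refine ⟨fun x => Or.inl rfl, ?_⟩
    intro x y z hxy hyz
    simp only [hRdef] at hxy hyz ⊢
    aesop
  have hCab : C R a b := by
    refine h1 R hR a b (fun j hj => ⟨Or.inr (Or.inl ⟨hj, rfl, rfl⟩), ?_⟩)
    simp [hRdef, hab, Ne.symm hab, hbc, Ne.symm hbc, hac, Ne.symm hac]
  have hCbc : C R b c := by
    refine h2 R hR b c (fun j hj => ⟨Or.inr (Or.inr (Or.inl ⟨hj, rfl, rfl⟩)), ?_⟩)
    simp [hRdef, hab, Ne.symm hab, hbc, Ne.symm hbc, hac, Ne.symm hac]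
  have hCac : C R a c := (hC R hR).2 hCab hCbc
  have sac : {i | R i a c} = K ∩ K' := by
    ext i
    simp [hRdef, hab, Ne.symm hab, hbc, Ne.symm hbc, hac, Ne.symm hac, Set.mem_inter_iff]
  have := decisive_of_C hA hC hU hIIA hR hac hCac
  rwa [sac] at this

end Main2

theorem minimal_decisive_tfae [Fintype I] (C : (I → A → A → Prop) → A → A → Prop)
    (hA : ThreeAlts A)
    (hC : ∀ P, IsPPOProfile P → IsPPO (C P))
    (hU : Unanimity C) (hIIA : IIA C)
    (K : Set I) (hK : Decisive C K) :
    List.TFAE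
      [ ∀ K' : Set I, K' ⊆ K → Decisive C K' → K' = K,
        ∀ K' : Set I, Decisive C K' → K ⊆ K',
        ∀ k ∈ K, ∀ P : I → A → A → Prop, IsPPOProfile P →
          ∀ a b : A, ¬ P k a b → ¬ C P a b ] := by
  tfae_have 1 → 2 := by
    intro h1 K' hK'
    have hint := decisive_inter hA hC hU hIIA hK hK'
    have heq := h1 (K ∩ K') Set.inter_subset_left hint
    intro i hi
    rw [← heq] at hi
    exact hi.2
  tfae_have 2 → 1 := fun h2 K' hsub hdec => hsub.antisymm (h2 K' hdec)
  tfae_have 2 → 3 := by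
    intro h2 k hk P hP a b hnP hCPab
    have hab : a ≠ b := by rintro rfl; exact hnP ((hP k).1 a)
    exact hnP (h2 _ (decisive_of_C hA hC hU hIIA hP hab hCPab) hk)
  tfae_have 3 → 2 := by
    intro h3 K' hK' k hk
    by_contra hkK'
    obtain ⟨a, b, -, hab, -, -⟩ := id hA
    set R : I → A → A → Prop := fun i x y => x = y ∨ (i ∈ K' ∧ x = a ∧ y = b) with hRdef
    have hR : IsPPOProfile R := by
      intro i
      refine ⟨fun x => Or.inl rfl, ?_⟩
      intro x y z hxy hyz
      simp only [hRdef] at hxy hyz ⊢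
      aesop
    have hCR : C R a b := by
      refine hK' R hR a b (fun j hj => ⟨Or.inr ⟨hj, rfl, rfl⟩, ?_⟩)
      simp [hRdef, hab, Ne.symm hab]
    have hnR : ¬ R k a b := by
      rintro (h | ⟨h, -⟩)
      · exact hab h
      · exact hkK' h
    exact h3 k hk R hR a b hnR hCR
  tfae_finish
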